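/- The matrix B of the previous statement has rank q^4 + q^2; equivalently, the trace of (1/v)B, where v = q^2(q-1)(q+1)(q^2+q+1), equals q^4 + q^2. -/

import Mathlib

set_option linter.unusedSectionVars false


/-- A point of `P^3(K)`: a 1-dimensional linear subspace of `K^4`. -/
def ProjPt (K : Type*) [Field K] : Type _ :=
  {W : Submodule K (Fin 4 → K) // Module.finrank K W = 1}

/-- A projective line in `P^3(K)`: a 2-dimensional linear subspace of `K^4`. -/
def ProjLine (K : Type*) [Field K] : Type _ :=
  {W : Submodule K (Fin 4 → K) // Module.finrank K W = 2}

/-- Two projective lines meet (at a point) if their intersection is 1-dimensional. -/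
def Meets {K : Type*} [Field K] (l m : ProjLine K) : Prop :=
  Module.finrank K ↥(l.1 ⊓ m.1) = 1

/-- Two projective lines are disjoint (skew) if their intersection is the zero subspace. -/
def LDisjoint {K : Type*} [Field K] (l m : ProjLine K) : Prop :=
  l.1 ⊓ m.1 = ⊥

instance (K : Type*) [Field K] [Fintype K] : Finite (ProjLine K) := by
  unfold ProjLine
  have : Finite (Submodule K (Fin 4 → K)) :=
    Finite.of_injective (fun W => (W : Set (Fin 4 → K))) SetLike.coe_injective
  infer_instance

noncomputable instance (K : Type*) [Field K] [Fintype K] : Fintype (ProjLine K) :=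
  Fintype.ofFinite _

open Classical in
/-- The Cavalieri matrix `B`, indexed by the lines of `P^3(F_q)`, with diagonal entries
`q^4(q^2-1)`, entries `-q^3(q-1)` for crossing pairs and `q(q^2-1)` for disjoint pairs. -/
noncomputable def BMat (K : Type*) [Field K] [Fintype K] :
    Matrix (ProjLine K) (ProjLine K) ℚ :=
  fun l m =>
    if l = m then (Fintype.card K : ℚ) ^ 4 * ((Fintype.card K : ℚ) ^ 2 - 1)
    else if Meets l m then -((Fintype.card K : ℚ) ^ 3 * ((Fintype.card K : ℚ) - 1))
    else (Fintype.card K : ℚ) * ((Fintype.card K : ℚ) ^ 2 - 1)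


open Module Submodule Finset

section Aux
variable {K : Type*} [Field K] [Fintype K]

local notation "V" => (Fin 4 → K)
local notation "q" => Fintype.card K

noncomputable instance : Fintype (Submodule K V) := by
  have : Finite (Submodule K V) :=
    Finite.of_injective (fun W => (W : Set V)) SetLike.coe_injective
  exact Fintype.ofFinite _

open Classical in
lemma card_filter_mem (W : Submodule K V) :
    ((Finset.univ : Finset V).filter (· ∈ W)).card = q ^ finrank K W := by
  rw [← Fintype.card_subtype]
  exact card_eq_pow_finrank

open Classical in
lemma card_filter_mem_diff {U W : Submodule K V} (h : U ≤ W) :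
    ((Finset.univ : Finset V).filter fun v => v ∈ W ∧ v ∉ U).card + q ^ finrank K U
      = q ^ finrank K W := by
  have h1 := Finset.card_filter_add_card_filter_not
    (s := (Finset.univ : Finset V).filter (· ∈ W)) (p := fun v => v ∈ U)
  rw [Finset.filter_filter, Finset.filter_filter] at h1
  have e1 : ((Finset.univ : Finset V).filter fun v => v ∈ W ∧ v ∈ U)
      = (Finset.univ : Finset V).filter (· ∈ U) := by
    apply Finset.filter_congr
    intro v _
    exact and_iff_right_iff_imp.mpr (fun hv => h hv)
  rw [e1, card_filter_mem, card_filter_mem] at h1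
  omega

lemma inf_span_singleton_eq_bot (P : Submodule K V) (v : V) (hv : v ∉ P) :
    P ⊓ span K {v} = ⊥ := by
  rw [eq_bot_iff]
  rintro x ⟨hxP, hxS⟩
  obtain ⟨c, rfl⟩ := mem_span_singleton.mp hxS
  rcases eq_or_ne c 0 with rfl | hc
  · simp
  · exact absurd (by simpa [smul_smul, inv_mul_cancel₀ hc] using P.smul_mem c⁻¹ hxP) hv

lemma finrank_sup_span_singleton (P : Submodule K V) (v : V) (hv : v ∉ P) :
    finrank K ↥(P ⊔ span K {v}) = finrank K P + 1 := by
  have hv0 : v ≠ 0 := by rintro rfl; exact hv P.zero_mem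
  have := Submodule.finrank_sup_add_finrank_inf_eq P (span K {v})
  rw [inf_span_singleton_eq_bot P v hv, finrank_bot, finrank_span_singleton hv0] at this
  omega

lemma card_mul_of_fiber {α β : Type*} [DecidableEq β] {s : Finset α} {t : Finset β}
    (f : α → β) (h : ∀ a ∈ s, f a ∈ t) {k : ℕ}
    (hk : ∀ b ∈ t, (s.filter fun a => f a = b).card = k) : s.card = t.card * k := by
  rw [Finset.card_eq_sum_card_fiberwise h, Finset.sum_congr rfl hk, Finset.sum_const, smul_eq_mul]

end Aux

section Counting
variable {K : Type*} [Field K] [Fintype K]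
local notation "V" => (Fin 4 → K)
local notation "q" => Fintype.card K

open Classical in
/-- The finset of "points" (1-dim subspaces) contained in `W`. -/
noncomputable def ptsF (W : Submodule K V) : Finset (Submodule K V) :=
  Finset.univ.filter fun P => P ≤ W ∧ finrank K P = 1

lemma hq2 (K : Type*) [Field K] [Fintype K] : 2 ≤ q := Fintype.one_lt_card

lemma hq2Q (K : Type*) [Field K] [Fintype K] : (2 : ℚ) ≤ (q : ℚ) := by
  exact_mod_cast hq2 K

open Classical in
lemma card_points_mul (W : Submodule K V) :
    (ptsF W).card * (q - 1) + 1 = q ^ finrank K W := by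
  set s : Finset V := Finset.univ.filter (fun v => v ∈ W ∧ v ∉ (⊥ : Submodule K V)) with hs
  have hsc : s.card + 1 = q ^ finrank K W := by
    have h := card_filter_mem_diff (bot_le : (⊥ : Submodule K V) ≤ W)
    rw [finrank_bot, pow_zero] at h
    exact h
  have hmap : ∀ v ∈ s, span K {v} ∈ ptsF W := by
    intro v hv
    rw [hs, Finset.mem_filter] at hv
    obtain ⟨-, hvW, hv0⟩ := hv
    rw [Submodule.mem_bot] at hv0
    rw [ptsF, Finset.mem_filter]
    exact ⟨Finset.mem_univ _, by rwa [span_singleton_le_iff_mem], finrank_span_singleton hv0⟩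
  have hfib : ∀ P ∈ ptsF W, (s.filter fun v => span K {v} = P).card = q - 1 := by
    intro P hP
    rw [ptsF, Finset.mem_filter] at hP
    obtain ⟨-, hPW, hP1⟩ := hP
    have e : (s.filter fun v => span K {v} = P)
        = Finset.univ.filter (fun v => v ∈ P ∧ v ∉ (⊥ : Submodule K V)) := by
      ext v
      simp only [hs, Finset.mem_filter, Finset.mem_univ, true_and, Submodule.mem_bot]
      constructor
      · rintro ⟨⟨hvW, hv0⟩, hsp⟩
        exact ⟨hsp ▸ mem_span_singleton_self v, hv0⟩
      · rintro ⟨hvP, hv0⟩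
        refine ⟨⟨hPW hvP, hv0⟩, ?_⟩
        apply eq_of_le_of_finrank_le (by rwa [span_singleton_le_iff_mem])
        rw [hP1, finrank_span_singleton hv0]
    rw [e]
    have := card_filter_mem_diff (bot_le : (⊥ : Submodule K V) ≤ P)
    rw [finrank_bot, hP1, pow_zero, pow_one] at this
    omega
  have := card_mul_of_fiber _ hmap hfib
  omega

open Classical in
lemma card_points_q (W : Submodule K V) :
    ((ptsF W).card : ℚ) * ((q : ℚ) - 1) = (q : ℚ) ^ finrank K W - 1 := by
  have h := card_points_mul W
  have h1 : 1 ≤ q := le_trans one_le_two (hq2 K)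
  have : ((ptsF W).card * (q - 1) + 1 : ℕ) = ((q : ℕ) ^ finrank K W : ℕ) := h
  have := congrArg (fun n : ℕ => (n : ℚ)) this
  push_cast [Nat.cast_sub h1] at this
  linarith

open Classical in
lemma card_points_line {W : Submodule K V} (h2 : finrank K W = 2) :
    ((ptsF W).card : ℚ) = (q : ℚ) + 1 := by
  have := card_points_q W
  rw [h2] at this
  have hqq : (2:ℚ) ≤ (q:ℚ) := by exact_mod_cast (Fintype.one_lt_card : 1 < q)
  have hne : (q : ℚ) - 1 ≠ 0 := by linarith
  have : ((ptsF W).card : ℚ) * ((q : ℚ) - 1) = ((q:ℚ) + 1) * ((q:ℚ) - 1) := by rw [this]; ring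
  exact mul_right_cancel₀ hne this

open Classical in
lemma card_points_top :
    ((ptsF (⊤ : Submodule K V)).card : ℚ) = (q : ℚ)^3 + (q:ℚ)^2 + (q:ℚ) + 1 := by
  have := card_points_q (⊤ : Submodule K V)
  rw [finrank_top, Module.finrank_pi, Fintype.card_fin] at this
  have hqq : (2:ℚ) ≤ (q:ℚ) := by exact_mod_cast (Fintype.one_lt_card : 1 < q)
  have hne : (q : ℚ) - 1 ≠ 0 := by linarith
  have h2 : ((ptsF (⊤ : Submodule K V)).card : ℚ) * ((q : ℚ) - 1)
      = ((q : ℚ)^3 + (q:ℚ)^2 + (q:ℚ) + 1) * ((q:ℚ) - 1) := by rw [this]; ring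
  exact mul_right_cancel₀ hne h2

end Counting

section Lines
variable {K : Type*} [Field K] [Fintype K]
local notation "V" => (Fin 4 → K)
local notation "q" => Fintype.card K

open Classical in
lemma card_line_subtype (p : Submodule K V → Prop) :
    ((Finset.univ : Finset (ProjLine K)).filter fun k => p k.1).card
      = ((Finset.univ : Finset (Submodule K V)).filter fun W => p W ∧ finrank K W = 2).card := by
  rw [← Fintype.card_subtype, ← Fintype.card_subtype]
  apply Fintype.card_congr
  exact { toFun := fun x => ⟨x.1.1, x.2, x.1.2⟩
          invFun := fun x => ⟨⟨x.1, x.2.2⟩, x.2.1⟩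
          left_inv := fun _ => rfl
          right_inv := fun _ => rfl }

open Classical in
lemma card_lines_through_mul {P : Submodule K V} (hP : finrank K P = 1) :
    ((Finset.univ : Finset (Submodule K V)).filter fun W => P ≤ W ∧ finrank K W = 2).card
        * (q^2 - q) + q = q^4 := by
  set s : Finset V := Finset.univ.filter (fun v => v ∈ (⊤ : Submodule K V) ∧ v ∉ P) with hs
  set t := (Finset.univ : Finset (Submodule K V)).filter fun W => P ≤ W ∧ finrank K W = 2 with ht
  have hsc : s.card + q = q ^ 4 := by
    have h := card_filter_mem_diff (le_top : P ≤ (⊤ : Submodule K V))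
    rw [hP, pow_one, finrank_top, Module.finrank_pi, Fintype.card_fin] at h
    exact h
  have hmap : ∀ v ∈ s, P ⊔ span K {v} ∈ t := by
    intro v hv
    rw [hs, Finset.mem_filter] at hv
    obtain ⟨-, -, hvP⟩ := hv
    rw [ht, Finset.mem_filter]
    refine ⟨Finset.mem_univ _, le_sup_left, ?_⟩
    rw [finrank_sup_span_singleton P v hvP, hP]
  have hfib : ∀ W ∈ t, (s.filter fun v => P ⊔ span K {v} = W).card = q^2 - q := by
    intro W hW
    rw [ht, Finset.mem_filter] at hW
    obtain ⟨-, hPW, hW2⟩ := hW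
    have e : (s.filter fun v => P ⊔ span K {v} = W)
        = Finset.univ.filter (fun v => v ∈ W ∧ v ∉ P) := by
      ext v
      simp only [hs, Finset.mem_filter, Finset.mem_univ, true_and, Submodule.mem_top]
      constructor
      · rintro ⟨hvP, hsup⟩
        exact ⟨hsup ▸ le_sup_right (a := P) (mem_span_singleton_self v), hvP⟩
      · rintro ⟨hvW, hvP⟩
        refine ⟨hvP, ?_⟩
        apply eq_of_le_of_finrank_le
          (sup_le hPW (by rwa [span_singleton_le_iff_mem]))
        rw [finrank_sup_span_singleton P v hvP, hP, hW2]
    rw [e]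
    have h := card_filter_mem_diff hPW
    rw [hP, pow_one, hW2] at h
    omega
  have := card_mul_of_fiber _ hmap hfib
  omega

open Classical in
lemma card_lines_through {P : Submodule K V} (hP : finrank K P = 1) :
    (((Finset.univ : Finset (ProjLine K)).filter fun k => P ≤ k.1).card : ℚ)
      = (q:ℚ)^2 + (q:ℚ) + 1 := by
  have h := card_lines_through_mul hP
  rw [← card_line_subtype (fun W => P ≤ W)] at h
  have hqq : (2:ℚ) ≤ (q:ℚ) := by exact_mod_cast (Fintype.one_lt_card : 1 < q)
  have hsub : q ≤ q^2 := Nat.le_self_pow (by norm_num) q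
  have hQ := congrArg (fun n : ℕ => (n : ℚ)) h
  push_cast [Nat.cast_sub hsub] at hQ
  have hne : (q:ℚ)^2 - (q:ℚ) ≠ 0 := by nlinarith
  have h2 : (((Finset.univ : Finset (ProjLine K)).filter fun k => P ≤ k.1).card : ℚ)
        * ((q:ℚ)^2 - (q:ℚ)) = ((q:ℚ)^2 + (q:ℚ) + 1) * ((q:ℚ)^2 - (q:ℚ)) := by
    nlinarith [hQ]
  exact mul_right_cancel₀ hne h2

open Classical in
lemma card_lines_through_nat {P : Submodule K V} (hP : finrank K P = 1) :
    ((Finset.univ : Finset (ProjLine K)).filter fun k => P ≤ k.1).card = q^2 + q + 1 := by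
  have := card_lines_through hP
  exact_mod_cast this

-- trichotomy
lemma not_meets_self (l : ProjLine K) : ¬ Meets l l := by
  unfold Meets
  rw [inf_idem, l.2]
  norm_num

lemma meets_symm {l m : ProjLine K} (h : Meets l m) : Meets m l := by
  unfold Meets at h ⊢
  rwa [inf_comm]

lemma finrank_inf_le_one {l k : ProjLine K} (h : l ≠ k) :
    finrank K ↥(l.1 ⊓ k.1) ≤ 1 := by
  by_contra h'
  push_neg at h'
  have h2 : 2 ≤ finrank K ↥(l.1 ⊓ k.1) := h'
  have e1 : l.1 ⊓ k.1 = l.1 :=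
    eq_of_le_of_finrank_le inf_le_left (by rw [l.2]; exact h2)
  have e2 : l.1 ⊓ k.1 = k.1 :=
    eq_of_le_of_finrank_le inf_le_right (by rw [k.2]; exact h2)
  exact h (Subtype.ext (e1 ▸ e2))

lemma inf_eq_point {l k : ProjLine K} (h : l ≠ k) {P : Submodule K V}
    (hP : finrank K P = 1) (h1 : P ≤ l.1) (h2 : P ≤ k.1) : l.1 ⊓ k.1 = P := by
  have hle : P ≤ l.1 ⊓ k.1 := le_inf h1 h2
  exact (eq_of_le_of_finrank_le hle (by rw [hP]; exact finrank_inf_le_one h)).symm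

lemma meets_of_point {l k : ProjLine K} (h : l ≠ k) {P : Submodule K V}
    (hP : finrank K P = 1) (h1 : P ≤ l.1) (h2 : P ≤ k.1) : Meets l k := by
  unfold Meets
  rw [inf_eq_point h hP h1 h2, hP]

lemma meets_ne {l k : ProjLine K} (h : Meets l k) : l ≠ k := by
  rintro rfl
  exact not_meets_self l h

lemma disjoint_of_not_meets {l k : ProjLine K} (hne : l ≠ k) (h : ¬ Meets l k) :
    LDisjoint l k := by
  have h1 := finrank_inf_le_one hne
  unfold Meets at h
  unfold LDisjoint
  rcases Nat.le_one_iff_eq_zero_or_eq_one.mp h1 with h0 | h1'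
  · exact Submodule.finrank_eq_zero.mp h0
  · exact absurd h1' h

lemma not_meets_of_disjoint {l k : ProjLine K} (h : LDisjoint l k) : ¬ Meets l k := by
  unfold LDisjoint at h
  unfold Meets
  rw [h, finrank_bot]
  norm_num

end Lines

section MainCounts
variable {K : Type*} [Field K] [Fintype K]
local notation "V" => (Fin 4 → K)
local notation "q" => Fintype.card K

lemma point_eq_of_le {A P : Submodule K V} (hA : finrank K A = 1) (hP : finrank K P = 1)
    (h : A ≤ P) : A = P :=
  eq_of_le_of_finrank_le h (by rw [hP, hA])

lemma finrank_sup_points {A B : Submodule K V} (hA : finrank K A = 1) (hB : finrank K B = 1)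
    (hne : A ≠ B) : finrank K ↥(A ⊔ B) = 2 := by
  have hinf : A ⊓ B = ⊥ := by
    by_contra hbot
    have h0 : finrank K ↥(A ⊓ B) ≠ 0 := fun h => hbot (Submodule.finrank_eq_zero.mp h)
    have h1 : finrank K ↥(A ⊓ B) ≤ 1 := hA ▸ Submodule.finrank_mono inf_le_left
    have h2 : finrank K ↥(A ⊓ B) = 1 := by omega
    have e1 : A ⊓ B = A := point_eq_of_le h2 hA inf_le_left
    have e2 : A ⊓ B = B := point_eq_of_le h2 hB inf_le_right
    exact hne (e1 ▸ e2)
  have := Submodule.finrank_sup_add_finrank_inf_eq A B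
  rw [hinf, finrank_bot, hA, hB] at this
  omega

open Classical in
lemma card_points_line_nat {W : Submodule K V} (h2 : finrank K W = 2) :
    (ptsF W).card = q + 1 := by
  have := card_points_line h2
  exact_mod_cast this

open Classical in
lemma card_points_top_nat :
    (ptsF (⊤ : Submodule K V)).card = q^3 + q^2 + q + 1 := by
  have := (card_points_top (K := K))
  exact_mod_cast this

open Classical in
lemma card_meets_row_nat (l : ProjLine K) :
    ((Finset.univ : Finset (ProjLine K)).filter fun k => Meets l k).card
      = (q + 1) * (q^2 + q) := by
  set s := (Finset.univ : Finset (ProjLine K)).filter (fun k => Meets l k) with hs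
  have hmap : ∀ k ∈ s, (l.1 ⊓ k.1) ∈ ptsF l.1 := by
    intro k hk
    rw [hs, Finset.mem_filter] at hk
    exact Finset.mem_filter.mpr ⟨Finset.mem_univ _, inf_le_left, hk.2⟩
  have hfib : ∀ P ∈ ptsF l.1, (s.filter fun k => l.1 ⊓ k.1 = P).card = q^2 + q := by
    intro P hP
    rw [ptsF, Finset.mem_filter] at hP
    obtain ⟨-, hPl, hP1⟩ := hP
    have e : (s.filter fun k => l.1 ⊓ k.1 = P)
        = ((Finset.univ : Finset (ProjLine K)).filter fun k => P ≤ k.1).filter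
            fun k => ¬ k = l := by
      rw [Finset.filter_filter]
      ext k
      simp only [hs, Finset.mem_filter, Finset.mem_univ, true_and, Finset.filter_filter]
      constructor
      · rintro ⟨hm, he⟩
        exact ⟨he ▸ inf_le_right, fun h => (meets_ne hm) h.symm⟩
      · rintro ⟨hPk, hkl⟩
        have hlk : l ≠ k := fun h => hkl h.symm
        exact ⟨meets_of_point hlk hP1 hPl hPk, inf_eq_point hlk hP1 hPl hPk⟩
    have hsplit := Finset.card_filter_add_card_filter_not
      (s := (Finset.univ : Finset (ProjLine K)).filter fun k => P ≤ k.1) (p := fun k => k = l)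
    have hl : (((Finset.univ : Finset (ProjLine K)).filter fun k => P ≤ k.1).filter
        fun k => k = l) = {l} := by
      ext k
      simp only [Finset.mem_filter, Finset.mem_univ, true_and, Finset.mem_singleton]
      exact ⟨fun h => h.2, fun h => ⟨h ▸ hPl, h⟩⟩
    rw [hl, Finset.card_singleton, card_lines_through_nat hP1] at hsplit
    rw [e, Finset.filter_filter]
    have : (((Finset.univ : Finset (ProjLine K)).filter fun k => P ≤ k.1).filter
        fun k => ¬ k = l).card = q ^ 2 + q := by omega
    rw [Finset.filter_filter] at this
    exact this
  have hcard := card_mul_of_fiber _ hmap hfib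
  rw [card_points_line_nat l.2] at hcard
  exact hcard

open Classical in
lemma card_meets_row (l : ProjLine K) :
    (((Finset.univ : Finset (ProjLine K)).filter fun k => Meets l k).card : ℚ)
      = (q:ℚ)^3 + 2*(q:ℚ)^2 + (q:ℚ) := by
  rw [card_meets_row_nat l]
  push_cast
  ring

open Classical in
lemma card_meets_pair_meets {l m : ProjLine K} (hm : Meets l m) :
    (((Finset.univ : Finset (ProjLine K)).filter fun k => Meets l k ∧ Meets k m).card : ℚ)
      = 2*(q:ℚ)^2 + (q:ℚ) - 1 := by
  have hne : l ≠ m := meets_ne hm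
  set P := l.1 ⊓ m.1 with hPdef
  have hP1 : finrank K ↥P = 1 := hm
  have hPl : P ≤ l.1 := inf_le_left
  have hPm : P ≤ m.1 := inf_le_right
  set s := (Finset.univ : Finset (ProjLine K)).filter (fun k => Meets l k ∧ Meets k m) with hs
  have hsplit := Finset.card_filter_add_card_filter_not
    (s := s) (p := fun k => P ≤ k.1)
  -- the part through P
  have h1 : (s.filter fun k => P ≤ k.1).card + 2 = q^2 + q + 1 := by
    set t0 := (Finset.univ : Finset (ProjLine K)).filter (fun k => P ≤ k.1) with ht0
    have e1 : (s.filter fun k => P ≤ k.1)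
        = t0.filter fun k => ¬ k = l ∧ ¬ k = m := by
      ext k
      simp only [hs, ht0, Finset.mem_filter, Finset.mem_univ, true_and, Finset.filter_filter]
      constructor
      · rintro ⟨⟨hkl, hkm⟩, hPk⟩
        exact ⟨hPk, fun h => meets_ne hkl h.symm, fun h => meets_ne hkm h⟩
      · rintro ⟨hPk, hkl, hkm⟩
        have hlk : l ≠ k := fun h => hkl h.symm
        exact ⟨⟨meets_of_point hlk hP1 hPl hPk, meets_of_point hkm hP1 hPk hPm⟩, hPk⟩
    have hsp1 := Finset.card_filter_add_card_filter_not (s := t0) (p := fun k => k = l)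
    have hl : t0.filter (fun k => k = l) = {l} := by
      ext k
      simp only [ht0, Finset.mem_filter, Finset.mem_univ, true_and, Finset.mem_singleton]
      exact ⟨fun h => h.2, fun h => ⟨h ▸ hPl, h⟩⟩
    have hsp2 := Finset.card_filter_add_card_filter_not
      (s := t0.filter fun k => ¬ k = l) (p := fun k => k = m)
    have hm2 : (t0.filter fun k => ¬ k = l).filter (fun k => k = m) = {m} := by
      ext k
      simp only [ht0, Finset.mem_filter, Finset.mem_univ, true_and, Finset.mem_singleton,
        Finset.filter_filter]
      constructor
      · rintro ⟨-, h⟩; exact h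
      · rintro rfl; exact ⟨⟨hPm, fun h => hne h.symm⟩, rfl⟩
    have hrw : (t0.filter fun k => ¬ k = l).filter (fun k => ¬ k = m)
        = t0.filter fun k => ¬ k = l ∧ ¬ k = m := by
      rw [Finset.filter_filter]
    rw [hl, Finset.card_singleton] at hsp1
    rw [hm2, Finset.card_singleton, hrw] at hsp2
    have ht0c : t0.card = q^2 + q + 1 := card_lines_through_nat hP1
    rw [e1]
    omega
  -- the part not through P
  have h2 : (s.filter fun k => ¬ P ≤ k.1).card = q * q := by
    have hcard : (s.filter fun k => ¬ P ≤ k.1).card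
        = (((ptsF l.1).erase P) ×ˢ ((ptsF m.1).erase P)).card := by
      apply Finset.card_bij' (i := fun (k : ProjLine K) (_ : k ∈ s.filter fun k => ¬ P ≤ k.1) =>
          ((k.1 ⊓ l.1 : Submodule K V), (k.1 ⊓ m.1 : Submodule K V)))
        (j := fun Ab hAb => ⟨Ab.1 ⊔ Ab.2, by
          rw [Finset.mem_product, Finset.mem_erase, Finset.mem_erase, ptsF, ptsF,
            Finset.mem_filter, Finset.mem_filter] at hAb
          obtain ⟨⟨hAP, -, hAl, hA1⟩, hBP, -, hBm, hB1⟩ := hAb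
          have hAB : Ab.1 ≠ Ab.2 := by
            rintro h
            exact hAP (point_eq_of_le hA1 hP1 (le_inf hAl (h ▸ hBm)))
          exact finrank_sup_points hA1 hB1 hAB⟩)
      case hi =>
        rintro k hk
        rw [Finset.mem_filter, hs, Finset.mem_filter] at hk
        obtain ⟨⟨-, hkl, hkm⟩, hnP⟩ := hk
        have hkl1 : finrank K ↥(k.1 ⊓ l.1) = 1 := meets_symm hkl
        have hkm1 : finrank K ↥(k.1 ⊓ m.1) = 1 := hkm
        rw [Finset.mem_product, Finset.mem_erase, Finset.mem_erase, ptsF, ptsF,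
          Finset.mem_filter, Finset.mem_filter]
        refine ⟨⟨fun h => hnP (h ▸ inf_le_left), Finset.mem_univ _, inf_le_right, hkl1⟩,
          fun h => hnP (h ▸ inf_le_left), Finset.mem_univ _, inf_le_right, hkm1⟩
      case hj =>
        rintro ⟨A, B⟩ hAb
        rw [Finset.mem_product, Finset.mem_erase, Finset.mem_erase, ptsF, ptsF,
          Finset.mem_filter, Finset.mem_filter] at hAb
        obtain ⟨⟨hAP, -, hAl, hA1⟩, hBP, -, hBm, hB1⟩ := hAb
        have hAB : A ≠ B := by
          rintro rfl
          exact hAP (point_eq_of_le hA1 hP1 (le_inf hAl hBm))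
        have hlk' : l.1 ≠ A ⊔ B := by
          intro h
          apply hBP
          apply point_eq_of_le hB1 hP1
          exact le_inf (by rw [h]; exact le_sup_right) hBm
        have hk'm : (A ⊔ B : Submodule K V) ≠ m.1 := by
          intro h
          apply hAP
          apply point_eq_of_le hA1 hP1
          exact le_inf hAl (by rw [← h]; exact le_sup_left)
        have hMlk : Meets l ⟨A ⊔ B, finrank_sup_points hA1 hB1 hAB⟩ :=
          meets_of_point (fun h => hlk' (congrArg Subtype.val h)) hA1 hAl le_sup_left
        have hMkm : Meets (⟨A ⊔ B, finrank_sup_points hA1 hB1 hAB⟩ : ProjLine K) m :=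
          meets_of_point (fun h => hk'm (congrArg Subtype.val h)) hB1 le_sup_right hBm
        refine Finset.mem_filter.mpr ⟨Finset.mem_filter.mpr ⟨Finset.mem_univ _, hMlk, hMkm⟩, ?_⟩
        intro hPk'
        apply hAP
        have hinf : (⟨A ⊔ B, finrank_sup_points hA1 hB1 hAB⟩ : ProjLine K).1 ⊓ l.1 = A :=
          inf_eq_point (fun h => hlk' (congrArg Subtype.val h).symm) hA1 le_sup_left hAl
        exact (point_eq_of_le hP1 hA1 (hinf ▸ le_inf hPk' hPl)).symm
      case left_inv =>
        rintro k hk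
        rw [Finset.mem_filter, hs, Finset.mem_filter] at hk
        obtain ⟨⟨-, hkl, hkm⟩, hnP⟩ := hk
        have hA1 : finrank K ↥(k.1 ⊓ l.1) = 1 := meets_symm hkl
        have hB1 : finrank K ↥(k.1 ⊓ m.1) = 1 := hkm
        have hAB : k.1 ⊓ l.1 ≠ k.1 ⊓ m.1 := by
          intro h
          apply hnP
          have hle : k.1 ⊓ l.1 ≤ P := le_inf inf_le_right (h ▸ inf_le_right)
          have := point_eq_of_le hA1 hP1 hle
          exact this ▸ inf_le_left
        apply Subtype.ext
        exact eq_of_le_of_finrank_le (sup_le inf_le_left inf_le_left)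
          (by rw [k.2, finrank_sup_points hA1 hB1 hAB])
      case right_inv =>
        rintro ⟨A, B⟩ hAb
        rw [Finset.mem_product, Finset.mem_erase, Finset.mem_erase, ptsF, ptsF,
          Finset.mem_filter, Finset.mem_filter] at hAb
        obtain ⟨⟨hAP, -, hAl, hA1⟩, hBP, -, hBm, hB1⟩ := hAb
        have hAB : A ≠ B := by
          rintro rfl
          exact hAP (point_eq_of_le hA1 hP1 (le_inf hAl hBm))
        have hlk' : l.1 ≠ A ⊔ B := by
          intro h
          apply hBP
          apply point_eq_of_le hB1 hP1
          exact le_inf (by rw [h]; exact le_sup_right) hBm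
        have hk'm : (A ⊔ B : Submodule K V) ≠ m.1 := by
          intro h
          apply hAP
          apply point_eq_of_le hA1 hP1
          exact le_inf hAl (by rw [← h]; exact le_sup_left)
        have e1 : (⟨A ⊔ B, finrank_sup_points hA1 hB1 hAB⟩ : ProjLine K).1 ⊓ l.1 = A :=
          inf_eq_point (fun h => hlk' (congrArg Subtype.val h).symm) hA1 le_sup_left hAl
        have e2 : (⟨A ⊔ B, finrank_sup_points hA1 hB1 hAB⟩ : ProjLine K).1 ⊓ m.1 = B :=
          inf_eq_point (fun h => hk'm (congrArg Subtype.val h)) hB1 le_sup_right hBm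
        simp only [e1, e2]
    have hPl' : P ∈ ptsF l.1 := by
      rw [ptsF, Finset.mem_filter]; exact ⟨Finset.mem_univ _, hPl, hP1⟩
    have hPm' : P ∈ ptsF m.1 := by
      rw [ptsF, Finset.mem_filter]; exact ⟨Finset.mem_univ _, hPm, hP1⟩
    rw [hcard, Finset.card_product, Finset.card_erase_of_mem hPl',
      Finset.card_erase_of_mem hPm', card_points_line_nat l.2, card_points_line_nat m.2,
      Nat.add_sub_cancel]
  have hq1 : 1 ≤ q := le_trans one_le_two (hq2 K)
  have hcardnat : s.card + 2 = q^2 + q + 1 + q * q := by omega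
  have := congrArg (fun n : ℕ => (n : ℚ)) hcardnat
  push_cast at this
  nlinarith [this]

end MainCounts

section MuCount
variable {K : Type*} [Field K] [Fintype K]
local notation "V" => (Fin 4 → K)
local notation "q" => Fintype.card K

open Classical in
lemma card_meets_pair_disjoint {l m : ProjLine K} (hd : LDisjoint l m) :
    (((Finset.univ : Finset (ProjLine K)).filter fun k => Meets l k ∧ Meets k m).card : ℚ)
      = ((q:ℚ) + 1)^2 := by
  have hbot : l.1 ⊓ m.1 = ⊥ := hd
  have hcard : ((Finset.univ : Finset (ProjLine K)).filter
        fun k => Meets l k ∧ Meets k m).card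
      = ((ptsF l.1) ×ˢ (ptsF m.1)).card := by
    apply Finset.card_bij' (i := fun (k : ProjLine K)
        (_ : k ∈ (Finset.univ : Finset (ProjLine K)).filter fun k => Meets l k ∧ Meets k m) =>
        ((k.1 ⊓ l.1 : Submodule K V), (k.1 ⊓ m.1 : Submodule K V)))
      (j := fun Ab hAb => ⟨Ab.1 ⊔ Ab.2, by
        rw [Finset.mem_product, ptsF, ptsF, Finset.mem_filter, Finset.mem_filter] at hAb
        obtain ⟨⟨-, hAl, hA1⟩, -, hBm, hB1⟩ := hAb
        have hAB : Ab.1 ≠ Ab.2 := by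
          rintro h
          have : Ab.1 ≤ l.1 ⊓ m.1 := le_inf hAl (h ▸ hBm)
          rw [hbot, le_bot_iff] at this
          rw [this, finrank_bot] at hA1
          exact absurd hA1 one_ne_zero.symm
        exact finrank_sup_points hA1 hB1 hAB⟩)
    case hi =>
      rintro k hk
      rw [Finset.mem_filter] at hk
      obtain ⟨-, hkl, hkm⟩ := hk
      rw [Finset.mem_product, ptsF, ptsF, Finset.mem_filter, Finset.mem_filter]
      exact ⟨⟨Finset.mem_univ _, inf_le_right, meets_symm hkl⟩,
        Finset.mem_univ _, inf_le_right, hkm⟩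
    case hj =>
      rintro ⟨A, B⟩ hAb
      rw [Finset.mem_product, ptsF, ptsF, Finset.mem_filter, Finset.mem_filter] at hAb
      obtain ⟨⟨-, hAl, hA1⟩, -, hBm, hB1⟩ := hAb
      have hAB : A ≠ B := by
        rintro rfl
        have : A ≤ l.1 ⊓ m.1 := le_inf hAl hBm
        rw [hbot, le_bot_iff] at this
        rw [this, finrank_bot] at hA1
        exact absurd hA1 one_ne_zero.symm
      have hlk' : l.1 ≠ A ⊔ B := by
        intro h
        have : B ≤ l.1 ⊓ m.1 := le_inf (by rw [h]; exact le_sup_right) hBm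
        rw [hbot, le_bot_iff] at this
        rw [this, finrank_bot] at hB1
        exact absurd hB1 one_ne_zero.symm
      have hk'm : (A ⊔ B : Submodule K V) ≠ m.1 := by
        intro h
        have : A ≤ l.1 ⊓ m.1 := le_inf hAl (by rw [← h]; exact le_sup_left)
        rw [hbot, le_bot_iff] at this
        rw [this, finrank_bot] at hA1
        exact absurd hA1 one_ne_zero.symm
      have hMlk : Meets l ⟨A ⊔ B, finrank_sup_points hA1 hB1 hAB⟩ :=
        meets_of_point (fun h => hlk' (congrArg Subtype.val h)) hA1 hAl le_sup_left
      have hMkm : Meets (⟨A ⊔ B, finrank_sup_points hA1 hB1 hAB⟩ : ProjLine K) m :=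
        meets_of_point (fun h => hk'm (congrArg Subtype.val h)) hB1 le_sup_right hBm
      exact Finset.mem_filter.mpr ⟨Finset.mem_univ _, hMlk, hMkm⟩
    case left_inv =>
      rintro k hk
      rw [Finset.mem_filter] at hk
      obtain ⟨-, hkl, hkm⟩ := hk
      have hA1 : finrank K ↥(k.1 ⊓ l.1) = 1 := meets_symm hkl
      have hB1 : finrank K ↥(k.1 ⊓ m.1) = 1 := hkm
      have hAB : k.1 ⊓ l.1 ≠ k.1 ⊓ m.1 := by
        intro h
        have : k.1 ⊓ l.1 ≤ l.1 ⊓ m.1 := le_inf inf_le_right (h ▸ inf_le_right)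
        rw [hbot, le_bot_iff] at this
        rw [this, finrank_bot] at hA1
        exact absurd hA1 one_ne_zero.symm
      apply Subtype.ext
      exact eq_of_le_of_finrank_le (sup_le inf_le_left inf_le_left)
        (by rw [k.2, finrank_sup_points hA1 hB1 hAB])
    case right_inv =>
      rintro ⟨A, B⟩ hAb
      rw [Finset.mem_product, ptsF, ptsF, Finset.mem_filter, Finset.mem_filter] at hAb
      obtain ⟨⟨-, hAl, hA1⟩, -, hBm, hB1⟩ := hAb
      have hAB : A ≠ B := by
        rintro rfl
        have : A ≤ l.1 ⊓ m.1 := le_inf hAl hBm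
        rw [hbot, le_bot_iff] at this
        rw [this, finrank_bot] at hA1
        exact absurd hA1 one_ne_zero.symm
      have hlk' : l.1 ≠ A ⊔ B := by
        intro h
        have : B ≤ l.1 ⊓ m.1 := le_inf (by rw [h]; exact le_sup_right) hBm
        rw [hbot, le_bot_iff] at this
        rw [this, finrank_bot] at hB1
        exact absurd hB1 one_ne_zero.symm
      have hk'm : (A ⊔ B : Submodule K V) ≠ m.1 := by
        intro h
        have : A ≤ l.1 ⊓ m.1 := le_inf hAl (by rw [← h]; exact le_sup_left)
        rw [hbot, le_bot_iff] at this
        rw [this, finrank_bot] at hA1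
        exact absurd hA1 one_ne_zero.symm
      have e1 : (⟨A ⊔ B, finrank_sup_points hA1 hB1 hAB⟩ : ProjLine K).1 ⊓ l.1 = A :=
        inf_eq_point (fun h => hlk' (congrArg Subtype.val h).symm) hA1 le_sup_left hAl
      have e2 : (⟨A ⊔ B, finrank_sup_points hA1 hB1 hAB⟩ : ProjLine K).1 ⊓ m.1 = B :=
        inf_eq_point (fun h => hk'm (congrArg Subtype.val h)) hB1 le_sup_right hBm
      simp only [e1, e2]
  rw [hcard, Finset.card_product, card_points_line_nat l.2, card_points_line_nat m.2]
  push_cast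
  ring

end MuCount

section TotalCount
variable {K : Type*} [Field K] [Fintype K]
local notation "V" => (Fin 4 → K)
local notation "q" => Fintype.card K

lemma card_prod_fiber_snd {α β : Type*} [Fintype α] [Fintype β] (p : α → β → Prop)
    [∀ a b, Decidable (p a b)] :
    ((Finset.univ : Finset (α × β)).filter fun x => p x.1 x.2).card
      = ∑ b : β, ((Finset.univ : Finset α).filter fun a => p a b).card := by
  classical
  rw [Finset.card_eq_sum_card_fiberwise
    (f := Prod.snd) (t := Finset.univ) (fun _ _ => Finset.mem_univ _)]
  apply Finset.sum_congr rfl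
  intro b _
  apply Finset.card_bij' (i := fun x _ => x.1) (j := fun a ha => (a, b))
  case hi =>
    rintro x hx
    rw [Finset.mem_filter, Finset.mem_filter] at hx
    rw [Finset.mem_filter]
    obtain ⟨⟨-, hp⟩, he⟩ := hx
    exact ⟨Finset.mem_univ _, he ▸ hp⟩
  case hj =>
    rintro a ha
    rw [Finset.mem_filter] at ha
    rw [Finset.mem_filter, Finset.mem_filter]
    exact ⟨⟨Finset.mem_univ _, ha.2⟩, rfl⟩
  case left_inv =>
    rintro x hx
    rw [Finset.mem_filter, Finset.mem_filter] at hx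
    exact Prod.ext rfl hx.2.symm
  case right_inv =>
    rintro a _
    rfl

lemma card_prod_fiber_fst {α β : Type*} [Fintype α] [Fintype β] (p : α → β → Prop)
    [∀ a b, Decidable (p a b)] :
    ((Finset.univ : Finset (α × β)).filter fun x => p x.1 x.2).card
      = ∑ a : α, ((Finset.univ : Finset β).filter fun b => p a b).card := by
  classical
  have := card_prod_fiber_snd (fun b a => p a b)
  rw [← this]
  apply Finset.card_bij' (i := fun x _ => (x.2, x.1)) (j := fun x _ => (x.2, x.1))
  case hi =>
    rintro x hx
    rw [Finset.mem_filter] at hx ⊢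
    exact ⟨Finset.mem_univ _, hx.2⟩
  case hj =>
    rintro x hx
    rw [Finset.mem_filter] at hx ⊢
    exact ⟨Finset.mem_univ _, hx.2⟩
  case left_inv => rintro x _; rfl
  case right_inv => rintro x _; rfl

open Classical in
lemma card_lines_total :
    (((Finset.univ : Finset (ProjLine K))).card : ℚ)
      = ((q:ℚ)^2 + 1) * ((q:ℚ)^2 + (q:ℚ) + 1) := by
  have h1' := card_prod_fiber_snd (α := Submodule K V) (β := ProjLine K)
      (fun P k => finrank K P = 1 ∧ P ≤ k.1)
  have h2' := card_prod_fiber_fst (α := Submodule K V) (β := ProjLine K)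
      (fun P k => finrank K P = 1 ∧ P ≤ k.1)
  have h1 : ∑ k : ProjLine K, ((Finset.univ : Finset (Submodule K V)).filter
      fun P : Submodule K V => finrank K P = 1 ∧ P ≤ k.1).card
      = (Finset.univ : Finset (ProjLine K)).card * (q + 1) := by
    have hterm : ∀ k : ProjLine K,
        ((Finset.univ : Finset (Submodule K V)).filter
          fun P : Submodule K V => finrank K P = 1 ∧ P ≤ k.1).card = q + 1 := by
      intro k
      have e : ((Finset.univ : Finset (Submodule K V)).filter
          fun P : Submodule K V => finrank K P = 1 ∧ P ≤ k.1) = ptsF k.1 := by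
        rw [ptsF]
        apply Finset.filter_congr
        intro P _
        exact and_comm
      rw [e, card_points_line_nat k.2]
    rw [Finset.sum_congr rfl (fun k _ => hterm k), Finset.sum_const, smul_eq_mul,
      Finset.card_univ]
  have h2 : ∑ P : Submodule K V, ((Finset.univ : Finset (ProjLine K)).filter
      fun k : ProjLine K => finrank K P = 1 ∧ P ≤ k.1).card
      = (q^3 + q^2 + q + 1) * (q^2 + q + 1) := by
    have hterm : ∀ P : Submodule K V,
        ((Finset.univ : Finset (ProjLine K)).filter
          fun k : ProjLine K => finrank K P = 1 ∧ P ≤ k.1).card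
        = if finrank K P = 1 then q^2 + q + 1 else 0 := by
      intro P
      by_cases h : finrank K P = 1
      · rw [if_pos h]
        have e : ((Finset.univ : Finset (ProjLine K)).filter
            fun k : ProjLine K => finrank K P = 1 ∧ P ≤ k.1)
            = (Finset.univ : Finset (ProjLine K)).filter fun k => P ≤ k.1 := by
          apply Finset.filter_congr
          intro k _
          simp [h]
        rw [e, card_lines_through_nat h]
      · rw [if_neg h]
        rw [Finset.card_eq_zero, Finset.filter_eq_empty_iff]
        intro k _
        exact fun hc => h hc.1
    rw [Finset.sum_congr rfl (fun P _ => hterm P), Finset.sum_ite, Finset.sum_const,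
      Finset.sum_const_zero, add_zero, smul_eq_mul]
    have e2 : (Finset.univ : Finset (Submodule K V)).filter (fun P : Submodule K V => finrank K P = 1)
        = ptsF (⊤ : Submodule K V) := by
      rw [ptsF]
      apply Finset.filter_congr
      intro P _
      simp [le_top]
    rw [e2, card_points_top_nat]
  have hQ : ((Finset.univ : Finset (ProjLine K)).card : ℚ) * ((q:ℚ) + 1)
      = ((q:ℚ)^3 + (q:ℚ)^2 + (q:ℚ) + 1) * ((q:ℚ)^2 + (q:ℚ) + 1) := by
    have := (h1.symm.trans (h1'.symm.trans h2')).trans h2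
    have := congrArg (fun n : ℕ => (n : ℚ)) this
    push_cast at this
    linarith
  have hne : (q:ℚ) + 1 ≠ 0 := by positivity
  apply mul_right_cancel₀ hne
  rw [hQ]
  ring

end TotalCount

section Final
variable {K : Type*} [Field K] [Fintype K]
local notation "V" => (Fin 4 → K)
local notation "q" => Fintype.card K

open Classical in
lemma BMat_apply_eq (l k : ProjLine K) :
    BMat K l k =
      (q:ℚ)*((q:ℚ)^2-1)
      + (-((q:ℚ)^3*((q:ℚ)-1)) - (q:ℚ)*((q:ℚ)^2-1)) * (if Meets l k then (1:ℚ) else 0)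
      + ((q:ℚ)^4*((q:ℚ)^2-1) - (q:ℚ)*((q:ℚ)^2-1)) * (if l = k then (1:ℚ) else 0) := by
  rw [BMat]
  by_cases h1 : l = k
  · subst h1
    rw [if_pos rfl, if_pos rfl, if_neg (not_meets_self l)]
    ring
  · rw [if_neg h1, if_neg h1]
    by_cases h2 : Meets l k
    · rw [if_pos h2, if_pos h2]
      ring
    · rw [if_neg h2, if_neg h2]
      ring

open Classical in
lemma BMat_mul_self :
    BMat K * BMat K = ((q:ℚ)^2*((q:ℚ)^2-1)*((q:ℚ)^2+(q:ℚ)+1)) • BMat K := by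
  ext l m
  rw [Matrix.mul_apply, Matrix.smul_apply, smul_eq_mul]
  have hexp : ∀ k : ProjLine K, BMat K l k * BMat K k m
      = ((q:ℚ)*((q:ℚ)^2-1)) * ((q:ℚ)*((q:ℚ)^2-1))
      + (((q:ℚ)*((q:ℚ)^2-1)) * (-((q:ℚ)^3*((q:ℚ)-1)) - (q:ℚ)*((q:ℚ)^2-1)))
          * (if Meets k m then (1:ℚ) else 0)
      + (((q:ℚ)*((q:ℚ)^2-1)) * ((q:ℚ)^4*((q:ℚ)^2-1) - (q:ℚ)*((q:ℚ)^2-1)))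
          * (if k = m then (1:ℚ) else 0)
      + ((-((q:ℚ)^3*((q:ℚ)-1)) - (q:ℚ)*((q:ℚ)^2-1)) * ((q:ℚ)*((q:ℚ)^2-1)))
          * (if Meets l k then (1:ℚ) else 0)
      + ((-((q:ℚ)^3*((q:ℚ)-1)) - (q:ℚ)*((q:ℚ)^2-1))
            * (-((q:ℚ)^3*((q:ℚ)-1)) - (q:ℚ)*((q:ℚ)^2-1)))
          * ((if Meets l k then (1:ℚ) else 0) * (if Meets k m then (1:ℚ) else 0))
      + ((-((q:ℚ)^3*((q:ℚ)-1)) - (q:ℚ)*((q:ℚ)^2-1))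
            * ((q:ℚ)^4*((q:ℚ)^2-1) - (q:ℚ)*((q:ℚ)^2-1)))
          * ((if Meets l k then (1:ℚ) else 0) * (if k = m then (1:ℚ) else 0))
      + (((q:ℚ)^4*((q:ℚ)^2-1) - (q:ℚ)*((q:ℚ)^2-1)) * ((q:ℚ)*((q:ℚ)^2-1)))
          * (if l = k then (1:ℚ) else 0)
      + (((q:ℚ)^4*((q:ℚ)^2-1) - (q:ℚ)*((q:ℚ)^2-1))
            * (-((q:ℚ)^3*((q:ℚ)-1)) - (q:ℚ)*((q:ℚ)^2-1)))
          * ((if l = k then (1:ℚ) else 0) * (if Meets k m then (1:ℚ) else 0))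
      + (((q:ℚ)^4*((q:ℚ)^2-1) - (q:ℚ)*((q:ℚ)^2-1))
            * ((q:ℚ)^4*((q:ℚ)^2-1) - (q:ℚ)*((q:ℚ)^2-1)))
          * ((if l = k then (1:ℚ) else 0) * (if k = m then (1:ℚ) else 0)) := by
    intro k
    rw [BMat_apply_eq l k, BMat_apply_eq k m]
    ring
  rw [Finset.sum_congr rfl (fun k _ => hexp k)]
  -- atomic sums
  have S1 : ∑ k : ProjLine K, (if Meets l k then (1:ℚ) else 0)
      = (((Finset.univ : Finset (ProjLine K)).filter fun k => Meets l k).card : ℚ) := by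
    rw [Finset.sum_boole]
  have S3 : ∑ k : ProjLine K, (if Meets k m then (1:ℚ) else 0)
      = (((Finset.univ : Finset (ProjLine K)).filter fun k => Meets m k).card : ℚ) := by
    rw [Finset.sum_boole]
    have e : (Finset.univ : Finset (ProjLine K)).filter (fun x => Meets x m)
        = (Finset.univ : Finset (ProjLine K)).filter (fun k => Meets m k) :=
      Finset.filter_congr (fun k _ => ⟨fun h => meets_symm h, fun h => meets_symm h⟩)
    rw [e]
  have S2 : ∑ k : ProjLine K, (if k = m then (1:ℚ) else 0) = 1 := by
    rw [Finset.sum_ite_eq' Finset.univ m (fun _ => (1:ℚ)), if_pos (Finset.mem_univ m)]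
  have S4 : ∑ k : ProjLine K, (if l = k then (1:ℚ) else 0) = 1 := by
    rw [Finset.sum_ite_eq Finset.univ l (fun _ => (1:ℚ)), if_pos (Finset.mem_univ l)]
  have S5 : ∑ k : ProjLine K,
      ((if Meets l k then (1:ℚ) else 0) * (if Meets k m then (1:ℚ) else 0))
      = (((Finset.univ : Finset (ProjLine K)).filter
          fun k => Meets l k ∧ Meets k m).card : ℚ) := by
    have e : ∀ k : ProjLine K,
        ((if Meets l k then (1:ℚ) else 0) * (if Meets k m then (1:ℚ) else 0))
        = (if Meets l k ∧ Meets k m then (1:ℚ) else 0) := by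
      intro k
      by_cases h1 : Meets l k <;> by_cases h2 : Meets k m <;> simp [h1, h2]
    rw [Finset.sum_congr rfl (fun k _ => e k), Finset.sum_boole]
  have S6 : ∑ k : ProjLine K,
      ((if Meets l k then (1:ℚ) else 0) * (if k = m then (1:ℚ) else 0))
      = (if Meets l m then (1:ℚ) else 0) := by
    have e : ∀ k : ProjLine K,
        ((if Meets l k then (1:ℚ) else 0) * (if k = m then (1:ℚ) else 0))
        = (if k = m then (if Meets l k then (1:ℚ) else 0) else 0) := by
      intro k
      by_cases h2 : k = m <;> simp [h2]
    rw [Finset.sum_congr rfl (fun k _ => e k),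
      Finset.sum_ite_eq' Finset.univ m (fun k => (if Meets l k then (1:ℚ) else 0)),
      if_pos (Finset.mem_univ m)]
  have S7 : ∑ k : ProjLine K,
      ((if l = k then (1:ℚ) else 0) * (if Meets k m then (1:ℚ) else 0))
      = (if Meets l m then (1:ℚ) else 0) := by
    have e : ∀ k : ProjLine K,
        ((if l = k then (1:ℚ) else 0) * (if Meets k m then (1:ℚ) else 0))
        = (if l = k then (if Meets k m then (1:ℚ) else 0) else 0) := by
      intro k
      by_cases h2 : l = k <;> simp [h2]
    rw [Finset.sum_congr rfl (fun k _ => e k),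
      Finset.sum_ite_eq Finset.univ l (fun k => (if Meets k m then (1:ℚ) else 0)),
      if_pos (Finset.mem_univ l)]
  have S8 : ∑ k : ProjLine K,
      ((if l = k then (1:ℚ) else 0) * (if k = m then (1:ℚ) else 0))
      = (if l = m then (1:ℚ) else 0) := by
    have e : ∀ k : ProjLine K,
        ((if l = k then (1:ℚ) else 0) * (if k = m then (1:ℚ) else 0))
        = (if l = k then (if k = m then (1:ℚ) else 0) else 0) := by
      intro k
      by_cases h2 : l = k <;> simp [h2]
    rw [Finset.sum_congr rfl (fun k _ => e k),
      Finset.sum_ite_eq Finset.univ l (fun k => (if k = m then (1:ℚ) else 0)),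
      if_pos (Finset.mem_univ l)]
  have hN : ((Fintype.card (ProjLine K) : ℚ))
      = ((q:ℚ)^2 + 1) * ((q:ℚ)^2 + (q:ℚ) + 1) := by
    rw [← Finset.card_univ]
    exact card_lines_total
  simp only [Finset.sum_add_distrib, ← Finset.mul_sum]
  rw [S1, S2, S3, S4, S5, S6, S7, S8, Finset.sum_const, nsmul_eq_mul, Finset.card_univ,
    hN, card_meets_row l, card_meets_row m]
  rw [BMat_apply_eq l m]
  rcases eq_or_ne l m with rfl | hne
  · rw [if_pos rfl, if_neg (not_meets_self l)]
    have e : ((Finset.univ : Finset (ProjLine K)).filter fun k => Meets l k ∧ Meets k l)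
        = (Finset.univ : Finset (ProjLine K)).filter fun k => Meets l k := by
      apply Finset.filter_congr
      intro k _
      exact ⟨fun h => h.1, fun h => ⟨h, meets_symm h⟩⟩
    rw [e, card_meets_row l]
    ring
  · rw [if_neg hne]
    by_cases hM : Meets l m
    · rw [if_pos hM, card_meets_pair_meets hM]
      ring
    · rw [if_neg hM, card_meets_pair_disjoint (disjoint_of_not_meets hne hM)]
      ring

end Final

lemma rank_eq_trace_of_idem {n : Type*} [Fintype n] [DecidableEq n]
    (P : Matrix n n ℚ) (h : P * P = P) : (P.rank : ℚ) = P.trace := by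
  have hf : P.mulVecLin ∘ₗ P.mulVecLin = P.mulVecLin := by
    rw [← Matrix.mulVecLin_mul, h]
  obtain ⟨p, hp⟩ := (LinearMap.isProj_iff_isIdempotentElem _).mpr hf
  have hrange : LinearMap.range P.mulVecLin = p := by
    apply le_antisymm
    · rintro x ⟨y, rfl⟩; exact hp.map_mem y
    · intro x hx; exact ⟨x, hp.map_id x hx⟩
  have ht := hp.trace
  rw [Matrix.rank, hrange, ← ht]
  have h2 : LinearMap.trace ℚ (n → ℚ) P.mulVecLin = P.trace := by
    rw [LinearMap.trace_eq_matrix_trace ℚ (Pi.basisFun ℚ n)]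
    congr 1
    rw [LinearMap.toMatrix_eq_toMatrix', ← Matrix.toLin'_apply']
    exact LinearMap.toMatrix'_toLin' P
  rw [h2]

section FinalThm
variable {K : Type*} [Field K] [Fintype K]
local notation "q" => Fintype.card K

open Classical in
lemma BMat_trace :
    (BMat K).trace = (((q:ℚ)^2 + 1) * ((q:ℚ)^2 + (q:ℚ) + 1)) * ((q:ℚ)^4 * ((q:ℚ)^2 - 1)) := by
  have hdiag : ∀ l : ProjLine K, (BMat K).diag l = (q:ℚ)^4 * ((q:ℚ)^2 - 1) := by
    intro l
    rw [Matrix.diag_apply, BMat, if_pos rfl]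
  rw [Matrix.trace]
  rw [Finset.sum_congr rfl (fun l _ => hdiag l), Finset.sum_const, nsmul_eq_mul,
    Finset.card_univ, ← Finset.card_univ]
  rw [card_lines_total]

theorem BMat_rank' :
    (BMat K).rank = q ^ 4 + q ^ 2 := by
  classical
  have hqq : (2:ℚ) ≤ (q:ℚ) := by exact_mod_cast (Fintype.one_lt_card : 1 < q)
  set v : ℚ := (q:ℚ)^2*((q:ℚ)^2-1)*((q:ℚ)^2+(q:ℚ)+1) with hv
  have hvne : v ≠ 0 := by
    rw [hv]
    have h1 : (q:ℚ)^2 ≠ 0 := by positivity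
    have h2 : (q:ℚ)^2 - 1 ≠ 0 := by nlinarith
    have h3 : (q:ℚ)^2 + (q:ℚ) + 1 ≠ 0 := by positivity
    exact mul_ne_zero (mul_ne_zero h1 h2) h3
  set P : Matrix (ProjLine K) (ProjLine K) ℚ := v⁻¹ • BMat K with hP
  have hPP : P * P = P := by
    rw [hP, Matrix.smul_mul, Matrix.mul_smul, BMat_mul_self, ← hv, smul_smul, smul_smul]
    congr 1
    field_simp
  have hlin : P.mulVecLin = v⁻¹ • (BMat K).mulVecLin := by
    ext x i
    simp [hP, Matrix.mulVecLin_apply, Matrix.smul_mulVec]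
  have hrank : P.rank = (BMat K).rank := by
    rw [Matrix.rank, Matrix.rank, hlin, LinearMap.range_smul _ _ (inv_ne_zero hvne)]
  have htr : P.trace = (q:ℚ)^4 + (q:ℚ)^2 := by
    rw [hP, Matrix.trace_smul, BMat_trace, smul_eq_mul]
    rw [inv_mul_eq_div]
    rw [div_eq_iff hvne, hv]
    ring
  have hfin : (((BMat K).rank : ℕ) : ℚ) = (q:ℚ)^4 + (q:ℚ)^2 := by
    rw [← hrank, rank_eq_trace_of_idem P hPP, htr]
  have : (((BMat K).rank : ℕ) : ℚ) = ((q^4 + q^2 : ℕ) : ℚ) := by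
    rw [hfin]; push_cast; ring
  exact_mod_cast this

end FinalThm


/-- The Cavalieri matrix `B` has rank `q^4 + q^2`. -/
theorem BMat_rank (K : Type*) [Field K] [Fintype K] :
    (BMat K).rank = Fintype.card K ^ 4 + Fintype.card K ^ 2 :=
  BMat_rank'
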